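/- If B₁,…,B_{d+1} are pairwise mutually unbiased orthonormal bases of ℂ^d, then Σ_{l=1}^{d+1} (1/(d+1)) P(B_l) = (I + d|Φ⟩⟨Φ|)/(d+1); equivalently Σ_l P(B_l) = I + d|Φ⟩⟨Φ|. -/

import Mathlib

open Matrix
open scoped ComplexOrder

/-- The conjugate-basis test projector P(B) = Σ_{ψ∈B} |ψ⟩⟨ψ| ⊗ |ψ*⟩⟨ψ*| on ℂ^d ⊗ ℂ^d. -/
noncomputable def projCB (d : ℕ) (B : Fin d → Fin d → ℂ) :
    Matrix (Fin d × Fin d) (Fin d × Fin d) ℂ :=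
  ∑ i, Matrix.kroneckerMap (· * ·) (Matrix.vecMulVec (B i) (star (B i)))
      (Matrix.vecMulVec (star (B i)) (B i))

/-- The maximally entangled state |Φ⟩ = d^{-1/2} Σ_j |j⟩⊗|j⟩ as a vector on Fin d × Fin d. -/
noncomputable def PhiVec (d : ℕ) : Fin d × Fin d → ℂ :=
  fun p => if p.1 = p.2 then ((Real.sqrt d : ℝ) : ℂ)⁻¹ else 0

/-- The rank-one projector |Φ⟩⟨Φ|. -/
noncomputable def PhiMat (d : ℕ) : Matrix (Fin d × Fin d) (Fin d × Fin d) ℂ :=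
  Matrix.vecMulVec (PhiVec d) (star (PhiVec d))

/-- B is an orthonormal basis of ℂ^d. -/
def IsONB (d : ℕ) (B : Fin d → Fin d → ℂ) : Prop :=
  ∀ i j, star (B i) ⬝ᵥ B j = if i = j then 1 else 0

namespace Stmt7Aux

variable {d : ℕ}

/-- The vectorized rank-one vector ψ ⊗ ψ*. -/
noncomputable def vv (B : Fin d → Fin d → ℂ) (i : Fin d) : Fin d × Fin d → ℂ :=
  fun p => B i p.1 * star (B i p.2)

/-- The (unnormalized) maximally entangled vector √d Φ, i.e. vec(I). -/
def ee (d : ℕ) : Fin d × Fin d → ℂ := fun p => if p.1 = p.2 then 1 else 0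

lemma star_ee : star (ee d) = ee d := by
  funext p; simp only [Pi.star_apply, ee]; split <;> simp

lemma rankone_mul {n : Type*} [Fintype n] (u v w x : n → ℂ) :
    vecMulVec u v * vecMulVec w x = (v ⬝ᵥ w) • vecMulVec u x := by
  ext i j
  simp only [Matrix.mul_apply, vecMulVec_apply, Matrix.smul_apply, smul_eq_mul, dotProduct]
  rw [Finset.sum_mul]
  exact Finset.sum_congr rfl fun k _ => by ring

lemma trace_vecMulVec {n : Type*} [Fintype n] (u v : n → ℂ) :
    Matrix.trace (vecMulVec u v) = v ⬝ᵥ u := by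
  simp [Matrix.trace, vecMulVec, dotProduct, mul_comm]

lemma projCB_eq (B : Fin d → Fin d → ℂ) :
    projCB d B = ∑ i, vecMulVec (vv B i) (star (vv B i)) := by
  unfold projCB
  refine Finset.sum_congr rfl fun i _ => ?_
  ext ⟨p1, p2⟩ ⟨q1, q2⟩
  simp only [kroneckerMap_apply, vecMulVec_apply, vv, Pi.star_apply, star_mul', star_star]
  ring

lemma dot_vv (B C : Fin d → Fin d → ℂ) (i j : Fin d) :
    star (vv B i) ⬝ᵥ vv C j
      = (star (B i) ⬝ᵥ C j) * star (star (B i) ⬝ᵥ C j) := by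
  simp only [dotProduct, Pi.star_apply, vv, Fintype.sum_prod_type, star_mul', star_star,
    star_sum]
  rw [Finset.sum_mul_sum]
  exact Finset.sum_congr rfl fun a _ => Finset.sum_congr rfl fun b _ => by ring

/-- completeness: Σ_i |ψ_i⟩⟨ψ_i| = 1 for an ONB. -/
lemma completeness {B : Fin d → Fin d → ℂ} (hB : IsONB d B) :
    ∑ i, vecMulVec (B i) (star (B i)) = (1 : Matrix (Fin d) (Fin d) ℂ) := by
  classical
  set C : Matrix (Fin d) (Fin d) ℂ := Matrix.of fun a i => B i a with hC
  have h1 : Cᴴ * C = 1 := by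
    ext i j
    simpa [Matrix.mul_apply, conjTranspose_apply, hC, dotProduct, Matrix.one_apply]
      using hB i j
  have h2 : C * Cᴴ = 1 := mul_eq_one_comm.mp h1
  ext a b
  calc (∑ i, vecMulVec (B i) (star (B i))) a b
      = (C * Cᴴ) a b := by
        simp [Matrix.mul_apply, conjTranspose_apply, hC, vecMulVec_apply, Matrix.sum_apply]
    _ = (1 : Matrix (Fin d) (Fin d) ℂ) a b := by rw [h2]

lemma sum_vv {B : Fin d → Fin d → ℂ} (hB : IsONB d B) :
    ∑ i, vv B i = ee d := by
  have h := completeness hB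
  funext p
  have := congrFun (congrFun (congrArg (fun M => fun a b => M a b) h) p.1) p.2
  simpa [Matrix.sum_apply, vecMulVec_apply, vv, ee, Matrix.one_apply] using this

end Stmt7Aux

namespace Stmt7Aux

variable {d : ℕ}

lemma ee_dot_ee : star (ee d) ⬝ᵥ ee d = (d : ℂ) := by
  simp [dotProduct, ee, Fintype.sum_prod_type, apply_ite]

lemma vv_dot_ee {B : Fin d → Fin d → ℂ} (hB : IsONB d B) (i : Fin d) :
    star (vv B i) ⬝ᵥ ee d = 1 := by
  have h := hB i i
  simp only [if_pos rfl] at h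
  calc star (vv B i) ⬝ᵥ ee d
      = ∑ a : Fin d, star (B i a) * B i a := by
        simp [dotProduct, ee, vv, Fintype.sum_prod_type, apply_ite, star_mul', star_star,
          mul_comm]
    _ = 1 := h

lemma ee_dot_vv {B : Fin d → Fin d → ℂ} (hB : IsONB d B) (i : Fin d) :
    star (ee d) ⬝ᵥ vv B i = 1 := by
  have h := hB i i
  simp only [if_pos rfl] at h
  calc star (ee d) ⬝ᵥ vv B i
      = ∑ a : Fin d, star (B i a) * B i a := by
        simp [dotProduct, ee, vv, Fintype.sum_prod_type, apply_ite, mul_comm]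
    _ = 1 := h

lemma sum_sum_vecMulVec {n m k : Type*} [Fintype m] [Fintype k] (u : m → n → ℂ)
    (x : k → n → ℂ) :
    ∑ i, ∑ j, vecMulVec (u i) (x j) = vecMulVec (∑ i, u i) (∑ j, x j) := by
  ext a b
  simp only [Matrix.sum_apply, vecMulVec_apply, Finset.sum_apply]
  rw [Finset.sum_mul_sum]

lemma trace_zero_herm {n : Type*} [Fintype n] [DecidableEq n] {M : Matrix n n ℂ}
    (hH : Mᴴ = M) (h0 : Matrix.trace (M * M) = 0) : M = 0 := by
  have h : Matrix.trace (Mᴴ * M) = 0 := by rw [hH]; exact h0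
  have h2 : ((∑ j, ∑ i, Complex.normSq (M i j) : ℝ) : ℂ) = 0 := by
    rw [← h]
    simp only [Matrix.trace, Matrix.diag, Matrix.mul_apply, conjTranspose_apply]
    push_cast
    exact Finset.sum_congr rfl fun j _ => Finset.sum_congr rfl fun i _ =>
      Complex.normSq_eq_conj_mul_self.symm ▸ rfl
  rw [Complex.ofReal_eq_zero] at h2
  have hnn : ∀ j ∈ Finset.univ, (0:ℝ) ≤ ∑ i, Complex.normSq (M i j) :=
    fun j _ => Finset.sum_nonneg fun i _ => Complex.normSq_nonneg _
  ext i j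
  have hj := (Finset.sum_eq_zero_iff_of_nonneg hnn).mp h2 j (Finset.mem_univ j)
  have hi := (Finset.sum_eq_zero_iff_of_nonneg
    (fun i _ => Complex.normSq_nonneg (M i j))).mp hj i (Finset.mem_univ i)
  simpa [Complex.normSq_eq_zero] using hi

end Stmt7Aux


namespace Stmt7Aux
variable {d : ℕ}

lemma sum_vecMulVec_left {n m : Type*} [Fintype m] (u : m → n → ℂ) (x : n → ℂ) :
    ∑ i, vecMulVec (u i) x = vecMulVec (∑ i, u i) x := by
  ext a b
  simp only [Matrix.sum_apply, vecMulVec_apply, Finset.sum_apply]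
  rw [Finset.sum_mul]

lemma sum_vecMulVec_right {n m : Type*} [Fintype m] (u : n → ℂ) (x : m → n → ℂ) :
    ∑ i, vecMulVec u (x i) = vecMulVec u (∑ i, x i) := by
  ext a b
  simp only [Matrix.sum_apply, vecMulVec_apply, Finset.sum_apply]
  rw [Finset.mul_sum]

end Stmt7Aux


open Stmt7Aux

/-- a complete set of d+1 mutually unbiased bases gives
Σ_l P(B_l) = I + d|Φ⟩⟨Φ|, i.e. Σ_l (1/(d+1)) P(B_l) = (I + d|Φ⟩⟨Φ|)/(d+1). -/
theorem stmt7 {d : ℕ} (hd : 0 < d)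
    (B : Fin (d + 1) → Fin d → Fin d → ℂ) (hB : ∀ l, IsONB d (B l))
    (hMUB : ∀ l m, l ≠ m → ∀ i j, ‖star (B l i) ⬝ᵥ B m j‖ ^ 2 = 1 / (d : ℝ)) :
    (∑ l, ((d : ℂ) + 1)⁻¹ • projCB d (B l) = ((d : ℂ) + 1)⁻¹ • (1 + (d : ℂ) • PhiMat d)) ∧
    ∑ l, projCB d (B l) = 1 + (d : ℂ) • PhiMat d := by
  classical
  have hd0 : (d : ℂ) ≠ 0 := Nat.cast_ne_zero.mpr hd.ne'
  set S : Matrix (Fin d × Fin d) (Fin d × Fin d) ℂ := ∑ l, projCB d (B l) with hS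
  set E : Matrix (Fin d × Fin d) (Fin d × Fin d) ℂ :=
    vecMulVec (ee d) (star (ee d)) with hE
  have hEphi : (d : ℂ) • PhiMat d = E := by
    ext p q
    have hsq : ((Real.sqrt d : ℝ) : ℂ)⁻¹ * ((Real.sqrt d : ℝ) : ℂ)⁻¹ = (d : ℂ)⁻¹ := by
      rw [← mul_inv, ← Complex.ofReal_mul, Real.mul_self_sqrt (Nat.cast_nonneg d)]
      simp
    simp only [Matrix.smul_apply, PhiMat, vecMulVec_apply, PhiVec, Pi.star_apply, hE, ee,
      smul_eq_mul]
    by_cases h1 : p.1 = p.2 <;> by_cases h2 : q.1 = q.2 <;>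
      simp [h1, h2, Complex.conj_ofReal, hsq, mul_comm, hd0, star_inv₀]
  have hmul : ∀ l m, projCB d (B l) * projCB d (B m) =
      if l = m then projCB d (B l) else (d : ℂ)⁻¹ • E := by
    intro l m
    rw [projCB_eq, projCB_eq, Finset.sum_mul_sum]
    by_cases hlm : l = m
    · subst hlm
      simp only [if_pos rfl]
      have key : ∀ i j : Fin d, vecMulVec (vv (B l) i) (star (vv (B l) i)) *
          vecMulVec (vv (B l) j) (star (vv (B l) j)) =
          (if i = j then (1:ℂ) else 0) • vecMulVec (vv (B l) i) (star (vv (B l) j)) := by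
        intro i j
        rw [rankone_mul, dot_vv, hB l i j]
        by_cases hij : i = j <;> simp [hij]
      rw [Finset.sum_congr rfl fun i _ => Finset.sum_congr rfl fun j _ => key i j]
      refine Finset.sum_congr rfl fun i _ => ?_
      simp
    · simp only [if_neg hlm]
      have key : ∀ i j : Fin d, vecMulVec (vv (B l) i) (star (vv (B l) i)) *
          vecMulVec (vv (B m) j) (star (vv (B m) j)) =
          (d : ℂ)⁻¹ • vecMulVec (vv (B l) i) (star (vv (B m) j)) := by
        intro i j
        rw [rankone_mul, dot_vv]
        congr 1
        rw [show star (star (B l i) ⬝ᵥ B m j) = (starRingEnd ℂ) (star (B l i) ⬝ᵥ B m j)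
          from rfl]
        rw [Complex.mul_conj, Complex.normSq_eq_norm_sq,
          hMUB l m hlm i j]
        push_cast
        rw [one_div]
      rw [Finset.sum_congr rfl fun i _ => Finset.sum_congr rfl fun j _ => key i j]
      simp_rw [← Finset.smul_sum]
      congr 1
      rw [sum_sum_vecMulVec, sum_vv (hB l), ← star_sum, sum_vv (hB m)]
  have hSS : S * S = S + ((d : ℂ) + 1) • E := by
    rw [hS, Finset.sum_mul_sum]
    have key : ∀ l : Fin (d+1), ∑ m, projCB d (B l) * projCB d (B m)
        = projCB d (B l) + E := by
      intro l
      rw [Finset.sum_congr rfl fun m _ => hmul l m,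
        Finset.sum_eq_add_sum_sdiff_singleton_of_mem (Finset.mem_univ l), if_pos rfl]
      congr 1
      rw [Finset.sum_congr rfl fun m hm => if_neg (by
        intro h; subst h; simp at hm)]
      rw [Finset.sum_const, Finset.sdiff_singleton_eq_erase,
        Finset.card_erase_of_mem (Finset.mem_univ l), Finset.card_univ, Fintype.card_fin,
        Nat.add_sub_cancel, ← Nat.cast_smul_eq_nsmul ℂ, smul_smul,
        mul_inv_cancel₀ hd0, one_smul]
    rw [Finset.sum_congr rfl fun l _ => key l, Finset.sum_add_distrib, Finset.sum_const,
      Finset.card_univ, Fintype.card_fin, ← Nat.cast_smul_eq_nsmul ℂ]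
    push_cast
    rfl
  have hprojE : ∀ l, projCB d (B l) * E = E := by
    intro l
    rw [projCB_eq, Finset.sum_mul,
      Finset.sum_congr rfl fun i _ => by
        rw [rankone_mul, vv_dot_ee (hB l) i, one_smul],
      sum_vecMulVec_left, sum_vv (hB l)]
  have hEproj : ∀ l, E * projCB d (B l) = E := by
    intro l
    rw [projCB_eq, Finset.mul_sum,
      Finset.sum_congr rfl fun i _ => by
        rw [rankone_mul, ee_dot_vv (hB l) i, one_smul],
      sum_vecMulVec_right, ← star_sum, sum_vv (hB l)]
  have hSE : S * E = ((d : ℂ) + 1) • E := by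
    rw [hS, Finset.sum_mul, Finset.sum_congr rfl fun l _ => hprojE l,
      Finset.sum_const, Finset.card_univ, Fintype.card_fin, ← Nat.cast_smul_eq_nsmul ℂ]
    push_cast
    rfl
  have hES : E * S = ((d : ℂ) + 1) • E := by
    rw [hS, Finset.mul_sum, Finset.sum_congr rfl fun l _ => hEproj l,
      Finset.sum_const, Finset.card_univ, Fintype.card_fin, ← Nat.cast_smul_eq_nsmul ℂ]
    push_cast
    rfl
  have hEE : E * E = (d : ℂ) • E := by
    rw [hE, rankone_mul, ee_dot_ee]
  have htrproj : ∀ l, (projCB d (B l)).trace = (d : ℂ) := by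
    intro l
    rw [projCB_eq, Matrix.trace_sum,
      Finset.sum_congr rfl fun i _ => by
        rw [Stmt7Aux.trace_vecMulVec, dot_vv, hB l i i, if_pos rfl, star_one, mul_one]]
    simp
  have htrS : S.trace = ((d : ℂ) + 1) * d := by
    rw [hS, Matrix.trace_sum, Finset.sum_congr rfl fun l _ => htrproj l, Finset.sum_const,
      Finset.card_univ, Fintype.card_fin, ← Nat.cast_smul_eq_nsmul ℂ]
    push_cast
    rw [smul_eq_mul]
    try ring
  have htrE : E.trace = (d : ℂ) := by
    rw [hE, Stmt7Aux.trace_vecMulVec, ee_dot_ee]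
  have htr1 : (1 : Matrix (Fin d × Fin d) (Fin d × Fin d) ℂ).trace = (d : ℂ) * d := by
    rw [Matrix.trace_one]
    simp [Fintype.card_prod]
  have hSH : Sᴴ = S := by
    rw [hS, conjTranspose_sum]
    refine Finset.sum_congr rfl fun l _ => ?_
    rw [projCB_eq, conjTranspose_sum]
    refine Finset.sum_congr rfl fun i _ => ?_
    ext a b
    simp [conjTranspose_apply, vecMulVec_apply, mul_comm]
  have hEH : Eᴴ = E := by
    rw [hE]
    ext a b
    simp only [conjTranspose_apply, vecMulVec_apply, Pi.star_apply, ee, star_mul',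
      star_star]
    split_ifs <;> simp
  set R : Matrix (Fin d × Fin d) (Fin d × Fin d) ℂ := S - 1 - E with hR
  have hSR : S * R = 0 := by
    rw [hR, mul_sub, mul_sub, mul_one, hSS, hSE]
    abel
  have hER : E * R = 0 := by
    rw [hR, mul_sub, mul_sub, mul_one, hES, hEE, add_smul, one_smul]
    abel
  have hRR : R * R = -R := by
    rw [hR]
    nth_rewrite 1 [sub_mul, sub_mul, one_mul]
    rw [← hR, hSR, hER]
    abel
  have htrR : R.trace = 0 := by
    rw [hR, Matrix.trace_sub, Matrix.trace_sub, htrS, htr1, htrE]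
    ring
  have hRH : Rᴴ = R := by
    rw [hR, conjTranspose_sub, conjTranspose_sub, hSH, hEH, conjTranspose_one]
  have hR0 : R = 0 := by
    refine trace_zero_herm hRH ?_
    rw [hRR, Matrix.trace_neg, htrR, neg_zero]
  have main : S = 1 + (d : ℂ) • PhiMat d := by
    rw [hEphi]
    rw [hR, sub_sub, sub_eq_zero] at hR0
    exact hR0
  refine ⟨?_, main⟩
  rw [← Finset.smul_sum, ← hS, main]
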